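/- There exist polynomials P₂, P₄, P₆, P₁₀ in ℚ[A₀, A₁, …, A₆], homogeneous of degrees 2, 4, 6 and 10 respectively, such that for every a₀ ∈ ℂ∖{0} and every r = (r₁,…,r₆) ∈ ℂ⁶, writing a_k = a₀·(−1)ᵏ·e_k(r₁,…,r₆) for the coefficients of the sextic f(x) = a₀∏_{i=1}^{6}(x − rᵢ) = a₀x⁶ + a₁x⁵ + ⋯ + a₆ (e_k = k-th elementary symmetric polynomial), one has a₀²·𝔄(r) = P₂(a₀,…,a₆), a₀⁴·𝔅(r) = P₄(a₀,…,a₆), a₀⁶·ℭ(r) = P₆(a₀,…,a₆), and a₀¹⁰·𝔇(r) = P₁₀(a₀,…,a₆). -/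

import Mathlib

/-!
The root-difference invariants `𝔄, 𝔅, ℭ, 𝔇` of a sextic, multiplied by the
appropriate power of the leading coefficient, are given by homogeneous polynomials
(of degrees 2, 4, 6, 10) in the coefficients of the sextic.

Sums over the partitions of `{1,…,6}` into pairs/triples are encoded as normalized
sums over all permutations of `Fin 6` (48 permutations per pair partition, 72 per
triple partition, 12 per (triple partition, bijection)).
-/

noncomputable def invA (r : Fin 6 → ℂ) : ℂ :=
  (1 / 48 : ℂ) * ∑ σ : Equiv.Perm (Fin 6),
    (r (σ 0) - r (σ 1)) ^ 2 * (r (σ 2) - r (σ 3)) ^ 2 * (r (σ 4) - r (σ 5)) ^ 2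

noncomputable def tripleTerm (r : Fin 6 → ℂ) (i j k : Fin 6) : ℂ :=
  (r i - r j) ^ 2 * (r j - r k) ^ 2 * (r k - r i) ^ 2

noncomputable def invB (r : Fin 6 → ℂ) : ℂ :=
  (1 / 72 : ℂ) * ∑ σ : Equiv.Perm (Fin 6),
    tripleTerm r (σ 0) (σ 1) (σ 2) * tripleTerm r (σ 3) (σ 4) (σ 5)

noncomputable def invC (r : Fin 6 → ℂ) : ℂ :=
  (1 / 12 : ℂ) * ∑ σ : Equiv.Perm (Fin 6),
    tripleTerm r (σ 0) (σ 1) (σ 2) * tripleTerm r (σ 3) (σ 4) (σ 5) *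
      ((r (σ 0) - r (σ 3)) ^ 2 * (r (σ 1) - r (σ 4)) ^ 2 * (r (σ 2) - r (σ 5)) ^ 2)

noncomputable def invD (r : Fin 6 → ℂ) : ℂ :=
  ∏ i : Fin 6, ∏ j ∈ Finset.Ioi i, (r i - r j) ^ 2

/-- The `k`-th elementary symmetric polynomial of the six roots. -/
noncomputable def esymm6 (r : Fin 6 → ℂ) (k : ℕ) : ℂ :=
  ∑ t ∈ Finset.powersetCard k Finset.univ, ∏ i ∈ t, r i

/-- The coefficients `a_k = a₀·(−1)ᵏ·e_k(r)` of `a₀·∏ (x − rᵢ) = a₀x⁶ + a₁x⁵ + ⋯ + a₆`. -/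
noncomputable def sexticCoeff (a0 : ℂ) (r : Fin 6 → ℂ) (k : Fin 7) : ℂ :=
  a0 * (-1) ^ (k : ℕ) * esymm6 r (k : ℕ)



namespace SexticAux
open MvPolynomial Finset AddMonoidAlgebra Fin

lemma lex_le_apply_zero {a b : Lex (Fin 6 →₀ ℕ)} (h : a ≤ b) :
    ofLex a 0 ≤ ofLex b 0 := by
  rcases (le_iff_eq_or_lt.mp h).imp id Finsupp.Lex.lt_iff.mp with rfl | ⟨i, hji, hi⟩
  · exact le_rfl
  · rcases eq_or_ne i 0 with rfl | hne
    · exact hi.le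
    · exact (hji 0 (Fin.pos_of_ne_zero hne)).le

lemma supDegree_apply_zero_le (p : MvPolynomial (Fin 6) ℚ) :
    ofLex (p.supDegree toLex) 0 ≤ p.degreeOf 0 := by
  obtain rfl | h0 := eq_or_ne p 0
  · rw [supDegree_zero]
    simp [show ((ofLex (⊥ : Lex (Fin 6 →₀ ℕ))) 0 = 0) from rfl]
  · obtain ⟨u, hu, he⟩ := Finset.exists_mem_eq_sup p.support
      (MvPolynomial.support_nonempty.mpr h0) toLex
    have h2 : p.supDegree toLex = toLex u := he
    rw [h2]
    simpa using monomial_le_degreeOf 0 hu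

/-- Degree-controlled fundamental theorem of symmetric functions, for `Fin 6` over `ℚ`. -/
lemma exists_preimage (d : ℕ) (p : MvPolynomial (Fin 6) ℚ) (hp : p.IsSymmetric)
    (hd : ofLex (p.supDegree toLex) 0 ≤ d) :
    ∃ F : MvPolynomial (Fin 6) ℚ, F.totalDegree ≤ d ∧
      aeval (fun i : Fin 6 => esymm (Fin 6) ℚ ((i : ℕ) + 1)) F = p := by
  induction' he : p.supDegree toLex using WellFoundedLT.induction with T ih generalizing p
  subst he
  obtain rfl | h0 := eq_or_ne p 0
  · exact ⟨0, by simp, by simp⟩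
  set lc := p.leadingCoeff toLex with hlc
  have hlc0 : lc ≠ 0 := by rwa [hlc, Ne, leadingCoeff_eq_zero toLex.injective]
  set t : Fin 6 →₀ ℕ :=
    Finsupp.equivFunOnFinite.symm (invAccumulate 6 6 <| ↑(ofLex <| p.supDegree toLex)) with ht
  have hacc : accumulate 6 6 ↑t = ↑(ofLex <| p.supDegree toLex) := by
    rw [ht]
    exact accumulate_invAccumulate le_rfl hp.antitone_supDegree
  have hd1 : (esymmAlgHomMonomial (Fin 6) t lc).supDegree toLex = p.supDegree toLex := by
    rw [← ofLex_inj, DFunLike.ext'_iff, supDegree_esymmAlgHomMonomial hlc0 t le_rfl]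
    exact hacc
  have htd : (monomial t lc).totalDegree ≤ d := by
    rw [totalDegree_monomial _ hlc0]
    have : (t.sum fun _ e => e) = accumulate 6 6 (↑t) 0 := by
      rw [accumulate_apply, Finsupp.sum_fintype _ _ (fun _ => rfl)]
      refine (Finset.sum_congr ?_ fun _ _ => rfl).symm
      ext i
      simp [Fin.zero_le]
    rw [this, hacc]
    exact hd
  have haev : aeval (fun i : Fin 6 => esymm (Fin 6) ℚ ((i : ℕ) + 1)) (monomial t lc)
      = esymmAlgHomMonomial (Fin 6) t lc := by
    rw [esymmAlgHomMonomial, esymmAlgHom_apply]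
  obtain he | hne := eq_or_ne p (esymmAlgHomMonomial (Fin 6) t lc)
  · exact ⟨monomial t lc, htd, by rw [haev, ← he]⟩
  · have hlt : (p - esymmAlgHomMonomial (Fin 6) t lc).supDegree toLex < p.supDegree toLex := by
      refine (supDegree_sub_lt_of_leadingCoeff_eq toLex.injective hd1.symm ?_).resolve_right hne
      rw [leadingCoeff_esymmAlgHomMonomial t le_rfl, hlc]
    obtain ⟨F, hF1, hF2⟩ := ih _ hlt _
      (hp.sub (isSymmetric_esymmAlgHomMonomial _ _))
      (le_trans (lex_le_apply_zero hlt.le) hd) rfl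
    refine ⟨F + monomial t lc, ?_, ?_⟩
    · exact le_trans (totalDegree_add _ _) (max_le hF1 htd)
    · rw [map_add, hF2, haev]
      ring
noncomputable def pT (a b : Fin 6) : MvPolynomial (Fin 6) ℚ := (X a - X b) ^ 2

noncomputable def tT (i j k : Fin 6) : MvPolynomial (Fin 6) ℚ := pT i j * pT j k * pT k i

noncomputable def fA : MvPolynomial (Fin 6) ℚ :=
  C (1 / 48 : ℚ) * ∑ σ : Equiv.Perm (Fin 6), pT (σ 0) (σ 1) * pT (σ 2) (σ 3) * pT (σ 4) (σ 5)

noncomputable def fB : MvPolynomial (Fin 6) ℚ :=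
  C (1 / 72 : ℚ) * ∑ σ : Equiv.Perm (Fin 6), tT (σ 0) (σ 1) (σ 2) * tT (σ 3) (σ 4) (σ 5)

noncomputable def fC : MvPolynomial (Fin 6) ℚ :=
  C (1 / 12 : ℚ) * ∑ σ : Equiv.Perm (Fin 6), tT (σ 0) (σ 1) (σ 2) * tT (σ 3) (σ 4) (σ 5) *
    (pT (σ 0) (σ 3) * pT (σ 1) (σ 4) * pT (σ 2) (σ 5))

noncomputable def fD : MvPolynomial (Fin 6) ℚ :=
  ∏ i : Fin 6, ∏ j ∈ Finset.Ioi i, pT i j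

lemma rename_pT (π : Equiv.Perm (Fin 6)) (a b : Fin 6) :
    rename π (pT a b) = pT (π a) (π b) := by
  simp [pT]

lemma rename_tT (π : Equiv.Perm (Fin 6)) (a b c : Fin 6) :
    rename π (tT a b c) = tT (π a) (π b) (π c) := by
  simp [tT, rename_pT]

lemma pT_comm (a b : Fin 6) : pT a b = pT b a := by unfold pT; ring

lemma symm_fA : fA.IsSymmetric := by
  intro π
  rw [fA, map_mul, rename_C, map_sum]
  refine congrArg (fun x => _ * x) ?_
  simp_rw [map_mul, rename_pT]
  exact Equiv.sum_comp (Equiv.mulLeft π)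
    (fun σ => pT (σ 0) (σ 1) * pT (σ 2) (σ 3) * pT (σ 4) (σ 5))

lemma symm_fB : fB.IsSymmetric := by
  intro π
  rw [fB, map_mul, rename_C, map_sum]
  refine congrArg (fun x => _ * x) ?_
  simp_rw [map_mul, rename_tT]
  exact Equiv.sum_comp (Equiv.mulLeft π)
    (fun σ => tT (σ 0) (σ 1) (σ 2) * tT (σ 3) (σ 4) (σ 5))

lemma symm_fC : fC.IsSymmetric := by
  intro π
  rw [fC, map_mul, rename_C, map_sum]
  refine congrArg (fun x => _ * x) ?_
  simp_rw [map_mul, rename_tT, rename_pT]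
  exact Equiv.sum_comp (Equiv.mulLeft π)
    (fun σ => tT (σ 0) (σ 1) (σ 2) * tT (σ 3) (σ 4) (σ 5) *
      (pT (σ 0) (σ 3) * pT (σ 1) (σ 4) * pT (σ 2) (σ 5)))

lemma fD_eq_pairs : fD = ∏ p ∈ (Finset.univ : Finset (Fin 6 × Fin 6)).filter
    (fun p => p.1 < p.2), pT p.1 p.2 := by
  rw [fD, Finset.prod_sigma']
  refine Finset.prod_nbij' (fun x => (x.1, x.2)) (fun p => ⟨p.1, p.2⟩) ?_ ?_ ?_ ?_ ?_ <;>
    simp [Finset.mem_sigma]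

lemma symm_fD : fD.IsSymmetric := by
  intro π
  rw [fD_eq_pairs, map_prod]
  simp_rw [rename_pT]
  refine Finset.prod_nbij'
    (fun p => if π p.1 < π p.2 then (π p.1, π p.2) else (π p.2, π p.1))
    (fun q => if π⁻¹ q.1 < π⁻¹ q.2 then (π⁻¹ q.1, π⁻¹ q.2) else (π⁻¹ q.2, π⁻¹ q.1))
    ?_ ?_ ?_ ?_ ?_
  · intro p hp
    simp only [Finset.mem_filter, Finset.mem_univ, true_and] at hp ⊢
    split_ifs with h
    · exact h
    · rcases lt_or_gt_of_ne (fun he : π p.1 = π p.2 => hp.ne (π.injective he)) with h' | h'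
      · exact absurd h' h
      · exact h'
  · intro q hq
    simp only [Finset.mem_filter, Finset.mem_univ, true_and] at hq ⊢
    split_ifs with h
    · exact h
    · rcases lt_or_gt_of_ne (fun he : π⁻¹ q.1 = π⁻¹ q.2 => hq.ne (π⁻¹.injective he)) with h' | h'
      · exact absurd h' h
      · exact h'
  · intro p hp
    simp only [Finset.mem_filter, Finset.mem_univ, true_and] at hp
    split_ifs with h <;> simp_all [not_lt_of_gt hp]
  · intro q hq
    simp only [Finset.mem_filter, Finset.mem_univ, true_and] at hq
    split_ifs with h <;> simp_all [not_lt_of_gt hq]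
  · intro p hp
    split_ifs with h
    · rfl
    · exact pT_comm _ _
lemma degreeOf_pT_le (k a b : Fin 6) :
    degreeOf k (pT a b) ≤ if k = a ∨ k = b then 2 else 0 := by
  split_ifs with h
  · refine le_trans (degreeOf_le_totalDegree _ _) ?_
    refine le_trans (totalDegree_pow _ _) ?_
    have : (X a - X b : MvPolynomial (Fin 6) ℚ).totalDegree ≤ 1 := by
      refine le_trans (totalDegree_sub _ _) ?_
      simp [totalDegree_X]
    omega
  · push_neg at h
    have hk : k ∉ (pT a b).vars := by
      intro hm
      have h1 := vars_pow (X a - X b : MvPolynomial (Fin 6) ℚ) 2 hm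
      have h2 := vars_sub_subset (p := (X a : MvPolynomial (Fin 6) ℚ)) (q := X b) h1
      rw [vars_X, vars_X] at h2
      simp only [Finset.mem_union, Finset.mem_singleton] at h2
      tauto
    exact degreeOf_le_iff.mpr fun m hm => by
      rw [mem_support_notMem_vars_zero hm hk]

lemma degreeOf_pT_sigma (σ : Equiv.Perm (Fin 6)) (a b : Fin 6) :
    degreeOf 0 (pT (σ a) (σ b)) ≤ if σ⁻¹ 0 = a ∨ σ⁻¹ 0 = b then 2 else 0 := by
  have h := degreeOf_pT_le 0 (σ a) (σ b)
  have e : ∀ j : Fin 6, ((0 : Fin 6) = σ j) ↔ σ⁻¹ 0 = j := by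
    intro j; rw [Equiv.Perm.inv_eq_iff_eq]
  simp only [e] at h
  exact h






lemma degreeOf_tT_sigma (σ : Equiv.Perm (Fin 6)) (a b c : Fin 6) :
    degreeOf 0 (tT (σ a) (σ b) (σ c)) ≤
      (if σ⁻¹ 0 = a ∨ σ⁻¹ 0 = b then 2 else 0) + (if σ⁻¹ 0 = b ∨ σ⁻¹ 0 = c then 2 else 0)
        + (if σ⁻¹ 0 = c ∨ σ⁻¹ 0 = a then 2 else 0) := by
  refine le_trans (degreeOf_mul_le _ _ _) ?_
  refine add_le_add (le_trans (degreeOf_mul_le _ _ _)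
    (add_le_add (degreeOf_pT_sigma σ a b) (degreeOf_pT_sigma σ b c))) (degreeOf_pT_sigma σ c a)

lemma degA : degreeOf 0 fA ≤ 2 := by
  rw [fA]
  refine le_trans (degreeOf_mul_le _ _ _) ?_
  rw [degreeOf_C, zero_add]
  refine le_trans (degreeOf_sum_le _ _ _) ?_
  refine Finset.sup_le fun σ _ => ?_
  refine le_trans (degreeOf_mul_le _ _ _) ?_
  refine le_trans (add_le_add (le_trans (degreeOf_mul_le _ _ _)
    (add_le_add (degreeOf_pT_sigma σ 0 1) (degreeOf_pT_sigma σ 2 3)))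
    (degreeOf_pT_sigma σ 4 5)) ?_
  generalize σ⁻¹ 0 = u
  revert u; decide








lemma degB : degreeOf 0 fB ≤ 4 := by
  rw [fB]
  refine le_trans (degreeOf_mul_le _ _ _) ?_
  rw [degreeOf_C, zero_add]
  refine le_trans (degreeOf_sum_le _ _ _) ?_
  refine Finset.sup_le fun σ _ => ?_
  refine le_trans (degreeOf_mul_le _ _ _) ?_
  refine le_trans (add_le_add (degreeOf_tT_sigma σ 0 1 2) (degreeOf_tT_sigma σ 3 4 5)) ?_
  generalize σ⁻¹ 0 = u
  revert u; decide

lemma degC : degreeOf 0 fC ≤ 6 := by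
  rw [fC]
  refine le_trans (degreeOf_mul_le _ _ _) ?_
  rw [degreeOf_C, zero_add]
  refine le_trans (degreeOf_sum_le _ _ _) ?_
  refine Finset.sup_le fun σ _ => ?_
  refine le_trans (degreeOf_mul_le _ _ _) ?_
  refine le_trans (add_le_add
    (le_trans (degreeOf_mul_le _ _ _)
      (add_le_add (degreeOf_tT_sigma σ 0 1 2) (degreeOf_tT_sigma σ 3 4 5)))
    (le_trans (degreeOf_mul_le _ _ _)
      (add_le_add (le_trans (degreeOf_mul_le _ _ _)
        (add_le_add (degreeOf_pT_sigma σ 0 3) (degreeOf_pT_sigma σ 1 4)))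
      (degreeOf_pT_sigma σ 2 5)))) ?_
  generalize σ⁻¹ 0 = u
  revert u; decide

lemma degD : degreeOf 0 fD ≤ 10 := by
  rw [fD]
  refine le_trans (degreeOf_prod_le _ _ _) ?_
  refine le_trans (Finset.sum_le_sum (fun i _ => degreeOf_prod_le 0 (Finset.Ioi i) _)) ?_
  refine le_trans (Finset.sum_le_sum (fun i _ =>
    Finset.sum_le_sum (fun j _ => degreeOf_pT_le 0 i j))) ?_
  refine le_trans (le_of_eq rfl) ?_
  show (∑ i : Fin 6, ∑ j ∈ Finset.Ioi i,
    if (0 : Fin 6) = i ∨ (0 : Fin 6) = j then 2 else 0) ≤ 10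
  decide
/-- The homogenizing embedding `Y_i ↦ (-1)^(i+1) X_(i+1)`. -/
noncomputable def emb : MvPolynomial (Fin 6) ℚ →ₐ[ℚ] MvPolynomial (Fin 7) ℚ :=
  aeval (fun i : Fin 6 => C ((-1 : ℚ) ^ ((i : ℕ) + 1)) * X i.succ)

lemma emb_homog {j : ℕ} {G : MvPolynomial (Fin 6) ℚ} (hG : G.IsHomogeneous j) :
    (emb G).IsHomogeneous j := by
  have h := hG.aeval (fun i : Fin 6 => C ((-1 : ℚ) ^ ((i : ℕ) + 1)) * X i.succ)
    (fun i => by simpa using isHomogeneous_C_mul_X_pow ((-1 : ℚ) ^ ((i : ℕ) + 1)) (i.succ) 1)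
  simpa [emb] using h

/-- evaluating a homogeneous polynomial at a scaled point -/
lemma aeval_homog_smul {j : ℕ} {G : MvPolynomial (Fin 6) ℚ} (hG : G.IsHomogeneous j)
    (c : ℂ) (v : Fin 6 → ℂ) :
    aeval (fun i => c * v i) G = c ^ j * aeval v G := by
  rw [G.as_sum, map_sum, map_sum, Finset.mul_sum]
  refine Finset.sum_congr rfl fun u hu => ?_
  rw [aeval_monomial, aeval_monomial]
  have hdeg : (∑ i ∈ u.support, u i) = j := by
    have := hG (mem_support_iff.mp hu)
    simpa [Finsupp.weight_apply, Finsupp.sum, mul_comm] using this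
  have : (u.prod fun i k => (c * v i) ^ k)
      = c ^ j * u.prod fun i k => v i ^ k := by
    rw [Finsupp.prod, Finsupp.prod]
    simp_rw [mul_pow]
    rw [Finset.prod_mul_distrib, Finset.prod_pow_eq_pow_sum, hdeg]
  rw [this]
  ring
lemma aeval_comp_eq (v : Fin 7 → ℂ) (g : Fin 6 → MvPolynomial (Fin 7) ℚ)
    (F : MvPolynomial (Fin 6) ℚ) :
    aeval v (aeval g F) = aeval (fun i => aeval v (g i)) F := by
  have h : (aeval v : MvPolynomial (Fin 7) ℚ →ₐ[ℚ] ℂ).comp (aeval g)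
      = aeval (fun i => aeval v (g i)) := by
    apply MvPolynomial.algHom_ext
    intro i
    simp
  exact AlgHom.congr_fun h F

lemma aeval_comp_eq6 (v : Fin 6 → ℂ) (g : Fin 6 → MvPolynomial (Fin 6) ℚ)
    (F : MvPolynomial (Fin 6) ℚ) :
    aeval v (aeval g F) = aeval (fun i => aeval v (g i)) F := by
  have h : (aeval v : MvPolynomial (Fin 6) ℚ →ₐ[ℚ] ℂ).comp (aeval g)
      = aeval (fun i => aeval v (g i)) := by
    apply MvPolynomial.algHom_ext
    intro i
    simp
  exact AlgHom.congr_fun h F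

lemma aeval_esymm_eq (r : Fin 6 → ℂ) (k : ℕ) :
    aeval r (esymm (Fin 6) ℚ k) = esymm6 r k := by
  rw [esymm, esymm6, map_sum]
  exact Finset.sum_congr rfl fun t _ => by rw [map_prod]; simp

/-- Master lemma: a symmetric polynomial of `x₀`-degree at most `D` in the roots gives a
homogeneous degree-`D` polynomial in the coefficients. -/
lemma master (D : ℕ) (f : MvPolynomial (Fin 6) ℚ) (hf : f.IsSymmetric)
    (hdeg : degreeOf 0 f ≤ D) :
    ∃ P : MvPolynomial (Fin 7) ℚ, P.IsHomogeneous D ∧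
      ∀ (a0 : ℂ) (r : Fin 6 → ℂ), aeval (sexticCoeff a0 r) P = a0 ^ D * aeval r f := by
  obtain ⟨F, hF1, hF2⟩ := exists_preimage D f hf
    (le_trans (supDegree_apply_zero_le f) hdeg)
  refine ⟨∑ j ∈ Finset.range (D + 1), X 0 ^ (D - j) * emb (homogeneousComponent j F), ?_, ?_⟩
  · refine IsHomogeneous.sum _ _ _ fun j hj => ?_
    have hjD : j ≤ D := by simpa using Nat.lt_succ_iff.mp (Finset.mem_range.mp hj)
    have := (isHomogeneous_X_pow (R := ℚ) (0 : Fin 7) (D - j)).mul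
      (emb_homog (homogeneousComponent_isHomogeneous (n := j) (φ := F)))
    rwa [Nat.sub_add_cancel hjD] at this
  · intro a0 r
    set a := sexticCoeff a0 r with ha
    have ha0 : a 0 = a0 := by
      simp [ha, sexticCoeff, esymm6]
    have hFsum : ∑ j ∈ Finset.range (D + 1), homogeneousComponent j F = F := by
      have hz : ∀ j ∈ Finset.range (D + 1), j ∉ Finset.range (F.totalDegree + 1) →
          homogeneousComponent j F = 0 := fun j hj hnj =>
        homogeneousComponent_eq_zero (n := j) (φ := F)
          (by simp only [Finset.mem_range] at hj hnj; omega)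
      have h2 := Finset.sum_subset (Finset.range_subset_range.mpr (Nat.succ_le_succ hF1)) hz
      rw [sum_homogeneousComponent F] at h2
      exact h2.symm
    have hemb : ∀ j : ℕ, aeval a (emb (homogeneousComponent j F))
        = a0 ^ j * aeval (fun i : Fin 6 => esymm6 r ((i : ℕ) + 1)) (homogeneousComponent j F) := by
      intro j
      rw [emb, aeval_comp_eq]
      have hg : (fun i : Fin 6 => aeval a (C ((-1 : ℚ) ^ ((i : ℕ) + 1)) * X i.succ))
          = fun i : Fin 6 => a0 * esymm6 r ((i : ℕ) + 1) := by
        funext i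
        rw [map_mul, aeval_X, aeval_C]
        rw [ha]
        show (algebraMap ℚ ℂ) ((-1 : ℚ) ^ ((i : ℕ) + 1))
          * (a0 * (-1) ^ ((i.succ : Fin 7) : ℕ) * esymm6 r ((i.succ : Fin 7) : ℕ)) = _
        have hv : ((i.succ : Fin 7) : ℕ) = (i : ℕ) + 1 := rfl
        rw [hv, map_pow, map_neg, map_one]
        have hsq : (((-1 : ℂ)) ^ ((i : ℕ) + 1)) ^ 2 = 1 := by
          rw [← pow_mul, mul_comm, pow_mul]
          norm_num
        calc ((-1 : ℂ)) ^ ((i : ℕ) + 1) * (a0 * (-1) ^ ((i : ℕ) + 1) * esymm6 r ((i : ℕ) + 1))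
            = (((-1 : ℂ)) ^ ((i : ℕ) + 1)) ^ 2 * (a0 * esymm6 r ((i : ℕ) + 1)) := by ring
          _ = a0 * esymm6 r ((i : ℕ) + 1) := by rw [hsq, one_mul]
      rw [hg, aeval_homog_smul (homogeneousComponent_isHomogeneous (n := j) (φ := F))]
    rw [map_sum]
    simp_rw [map_mul, map_pow, aeval_X, ha0, hemb]
    have : ∀ j ∈ Finset.range (D + 1), a0 ^ (D - j) * (a0 ^ j
        * aeval (fun i : Fin 6 => esymm6 r ((i : ℕ) + 1)) (homogeneousComponent j F))
        = a0 ^ D * aeval (fun i : Fin 6 => esymm6 r ((i : ℕ) + 1)) (homogeneousComponent j F) := by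
      intro j hj
      rw [← mul_assoc, ← pow_add, Nat.sub_add_cancel (Nat.lt_succ_iff.mp (Finset.mem_range.mp hj))]
    rw [Finset.sum_congr rfl this, ← Finset.mul_sum, ← map_sum, hFsum]
    congr 1
    rw [← hF2, aeval_comp_eq6]
    have he : (fun i : Fin 6 => esymm6 r ((i : ℕ) + 1))
        = fun i : Fin 6 => aeval r (esymm (Fin 6) ℚ ((i : ℕ) + 1)) :=
      funext fun i => (aeval_esymm_eq r _).symm
    rw [he]

lemma aeval_pT (v : Fin 6 → ℂ) (a b : Fin 6) : aeval v (pT a b) = (v a - v b) ^ 2 := by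
  simp [pT]

lemma aeval_tT (v : Fin 6 → ℂ) (a b c : Fin 6) : aeval v (tT a b c) = tripleTerm v a b c := by
  simp [tT, tripleTerm, aeval_pT]

lemma evalA (r : Fin 6 → ℂ) : aeval r fA = invA r := by
  rw [fA, invA, map_mul, map_sum]
  congr 1
  · rw [aeval_C]
    norm_num
  · exact Finset.sum_congr rfl fun σ _ => by simp [aeval_pT]

lemma evalB (r : Fin 6 → ℂ) : aeval r fB = invB r := by
  rw [fB, invB, map_mul, map_sum]
  congr 1
  · rw [aeval_C]
    norm_num
  · exact Finset.sum_congr rfl fun σ _ => by simp [aeval_tT]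

lemma evalC (r : Fin 6 → ℂ) : aeval r fC = invC r := by
  rw [fC, invC, map_mul, map_sum]
  congr 1
  · rw [aeval_C]
    norm_num
  · exact Finset.sum_congr rfl fun σ _ => by simp [aeval_tT, aeval_pT]

lemma evalD (r : Fin 6 → ℂ) : aeval r fD = invD r := by
  rw [fD, invD, map_prod]
  refine Finset.prod_congr rfl fun i _ => ?_
  rw [map_prod]
  exact Finset.prod_congr rfl fun j _ => aeval_pT r i j

end SexticAux

/-- There exist homogeneous polynomials `P₂, P₄, P₆, P₁₀` over `ℚ` of degrees
`2, 4, 6, 10` in the seven coefficients such that `a₀²·𝔄(r) = P₂(a₀,…,a₆)`,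
`a₀⁴·𝔅(r) = P₄(a₀,…,a₆)`, `a₀⁶·ℭ(r) = P₆(a₀,…,a₆)`, `a₀¹⁰·𝔇(r) = P₁₀(a₀,…,a₆)`. -/
theorem integral_invariants_are_polynomials_in_coefficients :
    ∃ P2 P4 P6 P10 : MvPolynomial (Fin 7) ℚ,
      P2.IsHomogeneous 2 ∧ P4.IsHomogeneous 4 ∧ P6.IsHomogeneous 6 ∧
      P10.IsHomogeneous 10 ∧
      ∀ (a0 : ℂ), a0 ≠ 0 → ∀ r : Fin 6 → ℂ,
        MvPolynomial.aeval (sexticCoeff a0 r) P2 = a0 ^ 2 * invA r ∧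
        MvPolynomial.aeval (sexticCoeff a0 r) P4 = a0 ^ 4 * invB r ∧
        MvPolynomial.aeval (sexticCoeff a0 r) P6 = a0 ^ 6 * invC r ∧
        MvPolynomial.aeval (sexticCoeff a0 r) P10 = a0 ^ 10 * invD r := by
  obtain ⟨P2, h2, e2⟩ := SexticAux.master 2 SexticAux.fA SexticAux.symm_fA SexticAux.degA
  obtain ⟨P4, h4, e4⟩ := SexticAux.master 4 SexticAux.fB SexticAux.symm_fB SexticAux.degB
  obtain ⟨P6, h6, e6⟩ := SexticAux.master 6 SexticAux.fC SexticAux.symm_fC SexticAux.degC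
  obtain ⟨P10, h10, e10⟩ := SexticAux.master 10 SexticAux.fD SexticAux.symm_fD SexticAux.degD
  refine ⟨P2, P4, P6, P10, h2, h4, h6, h10, fun a0 _ r => ⟨?_, ?_, ?_, ?_⟩⟩
  · rw [e2 a0 r, SexticAux.evalA]
  · rw [e4 a0 r, SexticAux.evalB]
  · rw [e6 a0 r, SexticAux.evalC]
  · rw [e10 a0 r, SexticAux.evalD]
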